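/- Let −1/2 < s ≤ 0, let q = (q_j)_{j∈ℤ} be a complex sequence with q_0 = 0 and ‖q‖_{s,∞} < ∞, let λ ∈ ℂ, and let g = (g_m)_{m∈ℤ} satisfy ‖g‖_{s,∞} < ∞. Suppose f = (f_m)_{m∈ℤ} satisfies ∑_{m∈ℤ} ⟨m⟩² |f_m|² < ∞ and, for every m ∈ ℤ, (m²π² − λ) f_m + ∑_{k∈ℤ} q_{m−k} f_k = g_m, where each such series converges absolutely. Then sup_{m∈ℤ} ⟨m⟩^{s+2} |f_m| < ∞. -/

import Mathlib

private lemma aux_summable_rpow (r : ℝ) (hr : r < -1) :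
    Summable (fun k : ℤ => (1 + |(k:ℝ)|) ^ r) := by
  have hr' : 1 < -r := by linarith
  have h1 : Summable fun k : ℤ => |(k:ℝ)| ^ (-(-r)) := Real.summable_abs_int_rpow hr'
  simp only [neg_neg] at h1
  have h2 : Summable (fun k : ℤ => if k = 0 then (1:ℝ) else 0) := by
    apply summable_of_ne_finset_zero (s := {0})
    intro b hb
    simp only [Finset.mem_singleton] at hb
    simp [hb]
  apply Summable.of_nonneg_of_le (f := fun k : ℤ => |(k:ℝ)| ^ r + if k = 0 then (1:ℝ) else 0)
    (fun k => Real.rpow_nonneg (by positivity) _) ?_ (h1.add h2)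
  intro k
  by_cases hk : k = 0
  · subst hk
    simp [Real.zero_rpow (by linarith : r ≠ 0)]
  · have hk1 : (1:ℝ) ≤ |(k:ℝ)| := by
      have : (1:ℤ) ≤ |k| := Int.one_le_abs (by exact_mod_cast hk)
      calc (1:ℝ) ≤ |k| := by exact_mod_cast this
        _ = |(k:ℝ)| := by push_cast; ring
    have : (1 + |(k:ℝ)|) ^ r ≤ |(k:ℝ)| ^ r :=
      Real.rpow_le_rpow_of_nonpos (by linarith) (by linarith) (by linarith)
    simp [hk, this]

/-- Regularity of solutions (Fourier-coefficient form): let `−1/2 < s ≤ 0`, let `q ∈ ℓ^{s,∞}`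
with `q_0 = 0`, `λ ∈ ℂ`, `g ∈ ℓ^{s,∞}`. If `f` satisfies `∑ ⟨m⟩²|f_m|² < ∞` and the equation
`(m²π² − λ) f_m + ∑_k q_{m−k} f_k = g_m` for every `m` (with each series converging
absolutely), then `sup_m ⟨m⟩^{s+2} |f_m| < ∞`. -/
theorem stmt_15 (s : ℝ) (hs₁ : -(1 / 2) < s) (hs₂ : s ≤ 0)
    (q : ℤ → ℂ) (hq0 : q 0 = 0)
    (hq : BddAbove (Set.range fun j : ℤ => (1 + |j| : ℝ) ^ s * ‖q j‖))
    (lam : ℂ) (g : ℤ → ℂ)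
    (hg : BddAbove (Set.range fun m : ℤ => (1 + |m| : ℝ) ^ s * ‖g m‖))
    (f : ℤ → ℂ)
    (hf : Summable fun m : ℤ => (1 + |m| : ℝ) ^ 2 * ‖f m‖ ^ 2)
    (hconv : ∀ m : ℤ, Summable fun k : ℤ => ‖q (m - k) * f k‖)
    (heq : ∀ m : ℤ,
      ((m : ℂ) ^ 2 * (Real.pi : ℂ) ^ 2 - lam) * f m + ∑' k : ℤ, q (m - k) * f k = g m) :
    ∃ M : ℝ, ∀ m : ℤ, (1 + |m| : ℝ) ^ (s + 2) * ‖f m‖ ≤ M := by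
  obtain ⟨Cq, hCq⟩ := hq
  obtain ⟨Cg, hCg⟩ := hg
  have hCq' : ∀ j : ℤ, (1 + |(j:ℝ)|) ^ s * ‖q j‖ ≤ Cq := by
    intro j
    have := hCq (Set.mem_range_self j)
    simpa [Int.cast_abs] using this
  have hCg' : ∀ m : ℤ, (1 + |(m:ℝ)|) ^ s * ‖g m‖ ≤ Cg := by
    intro m
    have := hCg (Set.mem_range_self m)
    simpa [Int.cast_abs] using this
  simp only [Int.cast_abs] at hf ⊢
  have hbpos : ∀ k : ℤ, (0:ℝ) < 1 + |(k:ℝ)| := fun k => by positivity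
  -- pointwise bounds for q and g
  have hq' : ∀ j : ℤ, ‖q j‖ ≤ Cq * (1 + |(j:ℝ)|) ^ (-s) := by
    intro j
    have h0 : (0:ℝ) < (1 + |(j:ℝ)|) ^ (-s) := Real.rpow_pos_of_pos (hbpos j) _
    calc ‖q j‖
        = (1 + |(j:ℝ)|) ^ (-s) * ((1 + |(j:ℝ)|) ^ s * ‖q j‖) := by
          rw [← mul_assoc, ← Real.rpow_add (hbpos j), neg_add_cancel, Real.rpow_zero, one_mul]
      _ ≤ (1 + |(j:ℝ)|) ^ (-s) * Cq := by
          exact mul_le_mul_of_nonneg_left (hCq' j) h0.le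
      _ = Cq * (1 + |(j:ℝ)|) ^ (-s) := mul_comm _ _
  have hg' : ∀ m : ℤ, ‖g m‖ ≤ Cg * (1 + |(m:ℝ)|) ^ (-s) := by
    intro m
    have h0 : (0:ℝ) < (1 + |(m:ℝ)|) ^ (-s) := Real.rpow_pos_of_pos (hbpos m) _
    calc ‖g m‖
        = (1 + |(m:ℝ)|) ^ (-s) * ((1 + |(m:ℝ)|) ^ s * ‖g m‖) := by
          rw [← mul_assoc, ← Real.rpow_add (hbpos m), neg_add_cancel, Real.rpow_zero, one_mul]
      _ ≤ (1 + |(m:ℝ)|) ^ (-s) * Cg := mul_le_mul_of_nonneg_left (hCg' m) h0.le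
      _ = Cg * (1 + |(m:ℝ)|) ^ (-s) := mul_comm _ _
  have hCq0 : 0 ≤ Cq := le_trans (by positivity) (hCq' 0)
  have hCg0 : 0 ≤ Cg := le_trans (by positivity) (hCg' 0)
  -- summability of weighted f
  set Fs : ℤ → ℝ := fun k => (1 + |(k:ℝ)|) ^ (-s) * ‖f k‖ with hFs
  have hsum1 : Summable (fun k : ℤ => (1 + |(k:ℝ)|) ^ (-2*s - 2)) :=
    aux_summable_rpow _ (by linarith)
  have hS : Summable Fs := by
    apply Summable.of_nonneg_of_le
      (f := fun k : ℤ => ((1 + |(k:ℝ)|) ^ (-2*s - 2) + (1 + |(k:ℝ)|) ^ 2 * ‖f k‖ ^ 2) / 2)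
      (fun k => by positivity) ?_ ((hsum1.add hf).div_const 2)
    intro k
    set t : ℝ := 1 + |(k:ℝ)| with ht
    have htp : (0:ℝ) < t := hbpos k
    set a : ℝ := t ^ (-s - 1) with ha
    set b : ℝ := t * ‖f k‖ with hb
    have e1 : a * b = t ^ (-s) * ‖f k‖ := by
      rw [ha, hb, ← mul_assoc]
      congr 1
      have h1 : t ^ (-s - 1) * t = t ^ (-s - 1) * t ^ (1:ℝ) := by rw [Real.rpow_one]
      rw [h1, ← Real.rpow_add htp]
      norm_num
    have e2 : a ^ 2 = t ^ (-2*s - 2) := by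
      rw [ha, ← Real.rpow_natCast (t ^ (-s - 1)) 2, ← Real.rpow_mul htp.le]
      norm_num
      ring_nf
    have e3 : b ^ 2 = t ^ 2 * ‖f k‖ ^ 2 := by rw [hb, mul_pow]
    have h2ab : 2 * a * b ≤ a ^ 2 + b ^ 2 := two_mul_le_add_sq a b
    have : a * b ≤ (a ^ 2 + b ^ 2) / 2 := by linarith
    rw [e1, e2, e3] at this
    exact this
  set S : ℝ := ∑' k, Fs k with hSdef
  have hS0 : 0 ≤ S := tsum_nonneg (fun k => by positivity)
  -- convolution bound
  have hT : ∀ m : ℤ, (∑' k : ℤ, ‖q (m - k) * f k‖)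
      ≤ Cq * (1 + |(m:ℝ)|) ^ (-s) * S := by
    intro m
    have hle : ∀ k : ℤ, ‖q (m - k) * f k‖
        ≤ (Cq * (1 + |(m:ℝ)|) ^ (-s)) * Fs k := by
      intro k
      rw [norm_mul]
      have hmk : (1 + |((m - k : ℤ) : ℝ)|) ≤ (1 + |(m:ℝ)|) * (1 + |(k:ℝ)|) := by
        push_cast
        have h1 : |(m:ℝ) - (k:ℝ)| ≤ |(m:ℝ)| + |(k:ℝ)| := abs_sub _ _
        nlinarith [abs_nonneg (m:ℝ), abs_nonneg (k:ℝ)]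
      have hpow : (1 + |((m - k : ℤ) : ℝ)|) ^ (-s)
          ≤ (1 + |(m:ℝ)|) ^ (-s) * (1 + |(k:ℝ)|) ^ (-s) := by
        rw [← Real.mul_rpow (hbpos m).le (hbpos k).le]
        exact Real.rpow_le_rpow (hbpos _).le hmk (by linarith)
      calc ‖q (m - k)‖ * ‖f k‖
          ≤ (Cq * (1 + |((m - k : ℤ) : ℝ)|) ^ (-s)) * ‖f k‖ :=
            mul_le_mul_of_nonneg_right (hq' _) (norm_nonneg _)
        _ ≤ (Cq * ((1 + |(m:ℝ)|) ^ (-s) * (1 + |(k:ℝ)|) ^ (-s))) * ‖f k‖ := by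
            apply mul_le_mul_of_nonneg_right _ (norm_nonneg _)
            exact mul_le_mul_of_nonneg_left hpow hCq0
        _ = (Cq * (1 + |(m:ℝ)|) ^ (-s)) * Fs k := by rw [hFs]; ring
    calc (∑' k : ℤ, ‖q (m - k) * f k‖)
        ≤ ∑' k : ℤ, (Cq * (1 + |(m:ℝ)|) ^ (-s)) * Fs k :=
          Summable.tsum_le_tsum hle (hconv m) (hS.mul_left _)
      _ = Cq * (1 + |(m:ℝ)|) ^ (-s) * S := by rw [tsum_mul_left]
  -- choice of cutoff
  set N : ℕ := ⌈2 * ‖lam‖⌉₊ + 1 with hN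
  have hpi : (3:ℝ) < Real.pi := Real.pi_gt_three
  -- lower bound on the multiplier for large m
  have hlow : ∀ m : ℤ, (N : ℤ) ≤ |m| →
      Real.pi ^ 2 / 8 * (1 + |(m:ℝ)|) ^ 2
        ≤ ‖(m : ℂ) ^ 2 * (Real.pi : ℂ) ^ 2 - lam‖ := by
    intro m hm
    have hm1 : (1:ℝ) ≤ |(m:ℝ)| := by
      have : (1:ℤ) ≤ |m| := le_trans (by omega) hm
      calc (1:ℝ) ≤ ((|m| : ℤ) : ℝ) := by exact_mod_cast this
        _ = |(m:ℝ)| := by push_cast; ring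
    have hm2 : 2 * ‖lam‖ ≤ |(m:ℝ)| := by
      have h1 : 2 * ‖lam‖ ≤ (N:ℝ) := by
        rw [hN]; push_cast
        linarith [Nat.le_ceil (2 * ‖lam‖)]
      have h2 : ((N:ℕ) : ℝ) ≤ |(m:ℝ)| := by
        have h3 : ((N:ℤ) : ℝ) ≤ ((|m| : ℤ) : ℝ) := by exact_mod_cast hm
        simpa [Int.cast_abs] using h3
      linarith
    have key : Real.pi ^ 2 * (m:ℝ) ^ 2 - ‖lam‖
        ≥ Real.pi ^ 2 / 8 * (1 + |(m:ℝ)|) ^ 2 := by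
      have hsq : (m:ℝ) ^ 2 = |(m:ℝ)| ^ 2 := (sq_abs _).symm
      rw [hsq]
      have h9 : (9:ℝ) ≤ Real.pi ^ 2 := by nlinarith
      have h7 : (0:ℝ) ≤ 7 * |(m:ℝ)| ^ 2 - 2 * |(m:ℝ)| - 1 := by nlinarith [sq_nonneg (|(m:ℝ)| - 1)]
      nlinarith [norm_nonneg lam, sq_nonneg (|(m:ℝ)| - 1), mul_nonneg h7 (by linarith : (0:ℝ) ≤ Real.pi ^ 2 - 9)]
    have habs : ‖(m : ℂ) ^ 2 * (Real.pi : ℂ) ^ 2‖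
        = Real.pi ^ 2 * (m:ℝ) ^ 2 := by
      rw [norm_mul]
      rw [show ((m : ℂ) ^ 2) = (((m:ℝ) ^ 2 : ℝ) : ℂ) by push_cast; ring]
      rw [show ((Real.pi : ℂ) ^ 2) = ((Real.pi ^ 2 : ℝ) : ℂ) by push_cast; ring]
      rw [Complex.norm_real, Complex.norm_real, Real.norm_eq_abs, Real.norm_eq_abs]
      rw [abs_of_nonneg (by positivity), abs_of_nonneg (by positivity)]
      ring
    have := norm_sub_norm_le ((m : ℂ) ^ 2 * (Real.pi : ℂ) ^ 2) lam
    rw [habs] at this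
    linarith
  -- the uniform bound for large m
  set M0 : ℝ := (Cg + Cq * S) * (8 / Real.pi ^ 2) with hM0
  have hbig : ∀ m : ℤ, (N : ℤ) ≤ |m| →
      (1 + |(m:ℝ)|) ^ (s + 2) * ‖f m‖ ≤ M0 := by
    intro m hm
    have hfm : ((m : ℂ) ^ 2 * (Real.pi : ℂ) ^ 2 - lam) * f m
        = g m - ∑' k : ℤ, q (m - k) * f k := by
      have := heq m
      linear_combination this
    have hTm : ‖∑' k : ℤ, q (m - k) * f k‖
        ≤ Cq * (1 + |(m:ℝ)|) ^ (-s) * S := by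
      refine le_trans ?_ (hT m)
      refine le_trans (norm_tsum_le_tsum_norm ?_) (le_of_eq ?_)
      · exact (hconv m)
      · rfl
    have hup : ‖((m : ℂ) ^ 2 * (Real.pi : ℂ) ^ 2 - lam) * f m‖
        ≤ (Cg + Cq * S) * (1 + |(m:ℝ)|) ^ (-s) := by
      rw [hfm]
      calc ‖g m - ∑' k : ℤ, q (m - k) * f k‖
          ≤ ‖g m‖ + ‖∑' k : ℤ, q (m - k) * f k‖ := norm_sub_le _ _
        _ ≤ Cg * (1 + |(m:ℝ)|) ^ (-s) + Cq * (1 + |(m:ℝ)|) ^ (-s) * S := by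
            exact add_le_add (hg' m) hTm
        _ = (Cg + Cq * S) * (1 + |(m:ℝ)|) ^ (-s) := by ring
    have hlowm := hlow m hm
    have hprod : Real.pi ^ 2 / 8 * (1 + |(m:ℝ)|) ^ 2 * ‖f m‖
        ≤ (Cg + Cq * S) * (1 + |(m:ℝ)|) ^ (-s) := by
      calc Real.pi ^ 2 / 8 * (1 + |(m:ℝ)|) ^ 2 * ‖f m‖
          ≤ ‖(m : ℂ) ^ 2 * (Real.pi : ℂ) ^ 2 - lam‖ * ‖f m‖ :=
            mul_le_mul_of_nonneg_right hlowm (norm_nonneg _)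
        _ = ‖((m : ℂ) ^ 2 * (Real.pi : ℂ) ^ 2 - lam) * f m‖ := (norm_mul _ _).symm
        _ ≤ (Cg + Cq * S) * (1 + |(m:ℝ)|) ^ (-s) := hup
    -- now convert to the (s+2)-weighted bound
    have hb := hbpos m
    have hsplit : (1 + |(m:ℝ)|) ^ (s + 2)
        = (1 + |(m:ℝ)|) ^ s * (1 + |(m:ℝ)|) ^ 2 := by
      rw [← Real.rpow_natCast (1 + |(m:ℝ)|) 2, ← Real.rpow_add hb]
      norm_num
    have hcancel : (1 + |(m:ℝ)|) ^ s * (1 + |(m:ℝ)|) ^ (-s) = 1 := by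
      rw [← Real.rpow_add hb]; simp
    have hsp : (0:ℝ) < (1 + |(m:ℝ)|) ^ s := Real.rpow_pos_of_pos hb _
    have hpi2 : (0:ℝ) < Real.pi ^ 2 / 8 := by positivity
    calc (1 + |(m:ℝ)|) ^ (s + 2) * ‖f m‖
        = (1 + |(m:ℝ)|) ^ s * ((1 + |(m:ℝ)|) ^ 2 * ‖f m‖) := by
          rw [hsplit]; ring
      _ ≤ (1 + |(m:ℝ)|) ^ s * ((Cg + Cq * S) * (1 + |(m:ℝ)|) ^ (-s) / (Real.pi ^ 2 / 8)) := by
          apply mul_le_mul_of_nonneg_left _ hsp.le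
          rw [le_div_iff₀ hpi2]
          calc (1 + |(m:ℝ)|) ^ 2 * ‖f m‖ * (Real.pi ^ 2 / 8)
              = Real.pi ^ 2 / 8 * (1 + |(m:ℝ)|) ^ 2 * ‖f m‖ := by ring
            _ ≤ (Cg + Cq * S) * (1 + |(m:ℝ)|) ^ (-s) := hprod
      _ = ((1 + |(m:ℝ)|) ^ s * (1 + |(m:ℝ)|) ^ (-s)) * ((Cg + Cq * S) * (8 / Real.pi ^ 2)) := by
          have hpne : (Real.pi:ℝ) ≠ 0 := Real.pi_ne_zero
          field_simp
      _ = M0 := by rw [hcancel, one_mul, hM0]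
  -- finish: combine with the finitely many small m
  have hne : (Finset.Icc (-(N:ℤ)) (N:ℤ)).Nonempty :=
    ⟨0, by simp [Finset.mem_Icc]⟩
  set F : ℤ → ℝ := fun m => (1 + |(m:ℝ)|) ^ (s + 2) * ‖f m‖ with hF
  refine ⟨max M0 ((Finset.Icc (-(N:ℤ)) (N:ℤ)).sup' hne F), ?_⟩
  intro m
  by_cases h : (N : ℤ) ≤ |m|
  · exact le_trans (hbig m h) (le_max_left _ _)
  · push_neg at h
    have hmem : m ∈ Finset.Icc (-(N:ℤ)) (N:ℤ) := by
      rw [Finset.mem_Icc]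
      constructor <;> [linarith [neg_abs_le m]; linarith [le_abs_self m]]
    exact le_trans (Finset.le_sup' F hmem) (le_max_right _ _)
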